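/- Let P be a Γ-colored poset. Then P satisfies EC, NA, AC, ICE2, and G3 if and only if P is a full heap. -/

import Mathlib

namespace GCP

/-- A Dynkin diagram on a finite set `Γ` of colors, encoded by the integers
`θ a b` of its generalized Cartan matrix. -/
structure DynkinDiagram (Γ : Type*) [Fintype Γ] where
  θ : Γ → Γ → ℤ
  diag : ∀ a, θ a a = 2
  offdiag_nonpos : ∀ a b, a ≠ b → θ a b ≤ 0
  zero_iff : ∀ a b, a ≠ b → (θ a b = 0 ↔ θ b a = 0)

variable {Γ : Type*} [Fintype Γ] {P : Type*} [PartialOrder P] [LocallyFiniteOrder P]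

/-- Distinct colors `a` and `b` are adjacent when `θ a b < 0`. -/
def DynkinDiagram.Adj (D : DynkinDiagram Γ) (a b : Γ) : Prop :=
  a ≠ b ∧ D.θ a b < 0

/-- Distinct colors `a` and `b` are distant when `θ a b = 0`. -/
def DynkinDiagram.Distant (D : DynkinDiagram Γ) (a b : Γ) : Prop :=
  a ≠ b ∧ D.θ a b = 0

theorem DynkinDiagram.Adj.symm {D : DynkinDiagram Γ} {a b : Γ} (h : D.Adj a b) :
    D.Adj b a :=
  ⟨h.1.symm, lt_of_le_of_ne (D.offdiag_nonpos b a h.1.symm)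
    (fun h0 => h.2.ne ((D.zero_iff a b h.1).mpr h0))⟩

/-- The simple graph underlying a Dynkin diagram, with an edge between each
pair of adjacent colors. -/
def DynkinDiagram.graph (D : DynkinDiagram Γ) : SimpleGraph Γ where
  Adj a b := D.Adj a b
  symm := ⟨fun _ _ h => h.symm⟩
  loopless := ⟨fun _ h => h.1 rfl⟩

/-- The Dynkin diagram is connected: any two colors are joined by a path of
adjacencies. -/
def DynkinDiagram.Connected (D : DynkinDiagram Γ) : Prop :=
  ∀ a b : Γ, Relation.ReflTransGen D.Adj a b

/-- A poset is connected: any two elements are linked by a finite chain of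
comparabilities (equivalently, the poset cannot be written as the disjoint
union of two nonempty subposets). -/
def PosetConnected (P : Type*) [PartialOrder P] : Prop :=
  ∀ x y : P, Relation.ReflTransGen (fun u v : P => u ≤ v ∨ v ≤ u) x y

/-- `x < y` are consecutive elements of the color `a`. -/
def Consecutive (κ : P → Γ) (a : Γ) (x y : P) : Prop :=
  x < y ∧ κ x = a ∧ κ y = a ∧ ∀ z ∈ Finset.Ioo x y, κ z ≠ a

/-- EC: elements with equal colors are comparable. -/
def EC (κ : P → Γ) : Prop := ∀ x y : P, κ x = κ y → x ≤ y ∨ y ≤ x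

/-- NA: neighbors (covering pairs) have adjacent colors. -/
def NA (D : DynkinDiagram Γ) (κ : P → Γ) : Prop :=
  ∀ x y : P, x ⋖ y → D.Adj (κ x) (κ y)

/-- AC: elements with adjacent colors are comparable. -/
def AC (D : DynkinDiagram Γ) (κ : P → Γ) : Prop :=
  ∀ x y : P, D.Adj (κ x) (κ y) → x ≤ y ∨ y ≤ x

/-- ICE2: the census of the open interval between consecutive elements of a
color is two. -/
def ICE2 (D : DynkinDiagram Γ) (κ : P → Γ) : Prop :=
  ∀ (a : Γ) (x y : P), Consecutive κ a x y →
    ∑ z ∈ Finset.Ioo x y, (-D.θ (κ z) a) = 2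

/-- `U(x,S)`: elements of `S` above `x` with color adjacent to that of `x`. -/
def USet (D : DynkinDiagram Γ) (κ : P → Γ) (S : Set P) (x : P) : Set P :=
  {y ∈ S | x < y ∧ D.Adj (κ y) (κ x)}

/-- `L(x,S)`: elements of `S` below `x` with color adjacent to that of `x`. -/
def LSet (D : DynkinDiagram Γ) (κ : P → Γ) (S : Set P) (x : P) : Set P :=
  {y ∈ S | y < x ∧ D.Adj (κ y) (κ x)}

/-- UCBk: for every `x` maximal among elements of its color, `U(x,P)` is
finite with census at most `k`. -/
def UCB (D : DynkinDiagram Γ) (κ : P → Γ) (k : ℕ) : Prop :=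
  ∀ x : P, (∀ y : P, κ y = κ x → ¬ x < y) →
    ∃ hfin : (USet D κ Set.univ x).Finite,
      ∑ y ∈ hfin.toFinset, (-D.θ (κ y) (κ x)) ≤ (k : ℤ)

/-- LCBk: for every `x` minimal among elements of its color, `L(x,P)` is
finite with census at most `k`. -/
def LCB (D : DynkinDiagram Γ) (κ : P → Γ) (k : ℕ) : Prop :=
  ∀ x : P, (∀ y : P, κ y = κ x → ¬ y < x) →
    ∃ hfin : (LSet D κ Set.univ x).Finite,
      ∑ y ∈ hfin.toFinset, (-D.θ (κ y) (κ x)) ≤ (k : ℤ)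

/-- The coloring properties of a Γ-colored d-complete poset (the coloring is
required to be surjective separately). -/
def DComplete (D : DynkinDiagram Γ) (κ : P → Γ) : Prop :=
  EC κ ∧ NA D κ ∧ AC D κ ∧ ICE2 D κ ∧ UCB D κ 1

/-- G1: each `P_a` and each `P_b ∪ P_c` for adjacent `b, c` is a chain. -/
def G1 (D : DynkinDiagram Γ) (κ : P → Γ) : Prop :=
  (∀ a : Γ, IsChain (· ≤ ·) {x : P | κ x = a}) ∧
    ∀ b c : Γ, D.Adj b c → IsChain (· ≤ ·) {x : P | κ x = b ∨ κ x = c}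

/-- G2: the order is the minimal partial order extending the given orders on
the chains `P_a` and `P_b ∪ P_c`; i.e. every relation `x ≤ y` lies in the
reflexive transitive closure of the relations between pairs of equal or
adjacent colors. -/
def G2 (D : DynkinDiagram Γ) (κ : P → Γ) : Prop :=
  ∀ x y : P, x ≤ y →
    Relation.ReflTransGen (fun u v : P => u ≤ v ∧ (κ u = κ v ∨ D.Adj (κ u) (κ v))) x y

/-- G3: every color set `P_a` is order-isomorphic to `ℤ`. -/
def G3 (κ : P → Γ) : Prop := ∀ a : Γ, Nonempty ({x : P | κ x = a} ≃o ℤ)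

/-- G4: for adjacent colors `a, b`, every element of color `a` has a neighbor
of color `b`. -/
def G4 (D : DynkinDiagram Γ) (κ : P → Γ) : Prop :=
  ∀ a b : Γ, D.Adj a b → ∀ x : P, κ x = a → ∃ y : P, κ y = b ∧ (x ⋖ y ∨ y ⋖ x)

/-- G5: the sum of `θ (κ z) a` over the closed interval between consecutive
elements of color `a` is two. -/
def G5 (D : DynkinDiagram Γ) (κ : P → Γ) : Prop :=
  ∀ (a : Γ) (x y : P), Consecutive κ a x y →
    ∑ z ∈ Finset.Icc x y, D.θ (κ z) a = 2

/-- A full heap: a Γ-colored poset satisfying G1–G5. -/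
def FullHeap (D : DynkinDiagram Γ) (κ : P → Γ) : Prop :=
  G1 D κ ∧ G2 D κ ∧ G3 κ ∧ G4 D κ ∧ G5 D κ

/-- S1: neighbors have equal or adjacent colors and incomparable elements
have distant colors. -/
def S1 (D : DynkinDiagram Γ) (κ : P → Γ) : Prop :=
  (∀ x y : P, x ⋖ y → κ x = κ y ∨ D.Adj (κ x) (κ y)) ∧
    ∀ x y : P, ¬ x ≤ y → ¬ y ≤ x → D.Distant (κ x) (κ y)

/-- S2: the open interval between consecutive elements of color `a` contains
either exactly two elements of color adjacent to `a`, both `1`-adjacent to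
`a`, or exactly one element, whose color is `2`-adjacent to `a`. -/
def S2 (D : DynkinDiagram Γ) (κ : P → Γ) : Prop :=
  ∀ (a : Γ) (x y : P), Consecutive κ a x y →
    (∃ u ∈ Finset.Ioo x y, ∃ v ∈ Finset.Ioo x y, u ≠ v ∧
        D.θ (κ u) a = -1 ∧ D.θ (κ v) a = -1 ∧
        ∀ z ∈ Finset.Ioo x y, D.Adj (κ z) a → z = u ∨ z = v) ∨
    (∃ w : P, Finset.Ioo x y = {w} ∧ D.θ (κ w) a = -2)

/-- S3: an element maximal among elements of its color is covered by at most
one element; any such cover has color `1`-adjacent to it and is maximal among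
elements of its own color. -/
def S3 (D : DynkinDiagram Γ) (κ : P → Γ) : Prop :=
  ∀ x : P, (∀ y : P, κ y = κ x → ¬ x < y) →
    (∀ y z : P, x ⋖ y → x ⋖ z → y = z) ∧
      ∀ y : P, x ⋖ y → D.θ (κ y) (κ x) = -1 ∧ ∀ z : P, κ z = κ y → ¬ y < z

/-- S4: the underlying simple graph of the Dynkin diagram is acyclic. -/
def S4 (D : DynkinDiagram Γ) : Prop := D.graph.IsAcyclic

/-- The coloring properties of a dominant minuscule heap (the poset is
additionally required to be finite, and the coloring surjective). -/
def DominantMinusculeHeapProps (D : DynkinDiagram Γ) (κ : P → Γ) : Prop :=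
  S1 D κ ∧ S2 D κ ∧ S3 D κ ∧ S4 D

/-- The color set `P_b` is bounded above in `P`. -/
def ColorBddAbove (κ : P → Γ) (b : Γ) : Prop := ∃ u : P, ∀ x : P, κ x = b → x ≤ u

/-- The color set `P_b` is bounded below in `P`. -/
def ColorBddBelow (κ : P → Γ) (b : Γ) : Prop := ∃ l : P, ∀ x : P, κ x = b → l ≤ x



theorem sum_Icc_split {x y : P} (h : x < y) (f : P → ℤ) :
    ∑ z ∈ Finset.Icc x y, f z = f x + f y + ∑ z ∈ Finset.Ioo x y, f z := by
  classical
  rw [Finset.Icc_eq_cons_Ioc h.le, Finset.sum_cons, ← Finset.Ioo_insert_right h,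
    Finset.sum_insert Finset.right_notMem_Ioo]
  ring

theorem next_color (κ : P → Γ) (hEC : EC κ) {b : Γ}
    (hG3b : Nonempty ({x : P | κ x = b} ≃o ℤ))
    {x : P} (hxb : κ x ≠ b) (hcomp : ∀ u : P, κ u = b → u ≤ x ∨ x ≤ u) :
    ∃ z : P, κ z = b ∧ x < z ∧ ∀ u : P, κ u = b → x < u → z ≤ u := by
  classical
  obtain ⟨e⟩ := hG3b
  have h1 : ∃ z₁ : P, κ z₁ = b ∧ x < z₁ := by
    by_contra hno
    push_neg at hno
    have hle : ∀ u : P, κ u = b → u ≤ x := by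
      intro u hu
      rcases hcomp u hu with h | h
      · exact h
      · rcases h.lt_or_eq with h' | h'
        · exact absurd h' (hno u hu)
        · exact absurd (h' ▸ hu) hxb
    set f : ℕ → P := fun n => ((e.symm (n : ℤ)) : {x : P | κ x = b}).val with hf
    have hfc : ∀ n, κ (f n) = b := fun n => (e.symm (n : ℤ)).2
    have hmono : StrictMono f := by
      intro m n hmn
      exact Subtype.coe_lt_coe.2 (e.symm.strictMono (by exact_mod_cast hmn))
    obtain ⟨m, n, hmn, heq⟩ := Finite.exists_ne_map_eq_of_infinite
      (fun n : ℕ => (⟨f n, Finset.mem_Icc.2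
        ⟨hmono.monotone (Nat.zero_le n), hle _ (hfc n)⟩⟩ : {z // z ∈ Finset.Icc (f 0) x}))
    have hfeq : f m = f n := congrArg (fun z : {z // z ∈ Finset.Icc _ _} => z.val) heq
    exact hmn (hmono.injective hfeq)
  obtain ⟨z₁, hz₁b, hxz₁⟩ := h1
  obtain ⟨z, hzT, hzmin⟩ := ((Finset.Ioc x z₁).filter (fun u => κ u = b)).exists_minimal
    ⟨z₁, by simp [Finset.mem_Ioc, hxz₁, hz₁b]⟩
  simp only [Finset.mem_filter, Finset.mem_Ioc] at hzT
  refine ⟨z, hzT.2, hzT.1.1, ?_⟩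
  intro u hub hxu
  by_contra hzu
  have huz : u < z := by
    rcases hEC u z (hub.trans hzT.2.symm) with h | h
    · exact lt_of_le_of_ne h (fun he => hzu (le_of_eq he.symm))
    · exact absurd h hzu
  exact absurd (hzmin (Finset.mem_filter.2 ⟨Finset.mem_Ioc.2 ⟨hxu, huz.le.trans hzT.1.2⟩, hub⟩) huz.le) (not_le_of_gt huz)

theorem prev_color (κ : P → Γ) (hEC : EC κ) {b : Γ}
    (hG3b : Nonempty ({x : P | κ x = b} ≃o ℤ))
    {x : P} (hxb : κ x ≠ b) (hcomp : ∀ u : P, κ u = b → u ≤ x ∨ x ≤ u) :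
    ∃ z : P, κ z = b ∧ z < x ∧ ∀ u : P, κ u = b → u < x → u ≤ z := by
  classical
  obtain ⟨e⟩ := hG3b
  have h1 : ∃ z₁ : P, κ z₁ = b ∧ z₁ < x := by
    by_contra hno
    push_neg at hno
    have hle : ∀ u : P, κ u = b → x ≤ u := by
      intro u hu
      rcases hcomp u hu with h | h
      · rcases h.lt_or_eq with h' | h'
        · exact absurd h' (hno u hu)
        · exact absurd (h' ▸ hu) hxb
      · exact h
    set f : ℕ → P := fun n => ((e.symm (-(n : ℤ))) : {x : P | κ x = b}).val with hf
    have hfc : ∀ n, κ (f n) = b := fun n => (e.symm (-(n : ℤ))).2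
    have hanti : StrictAnti f := by
      intro m n hmn
      have hmn' : (m : ℤ) < (n : ℤ) := by exact_mod_cast hmn
      exact Subtype.coe_lt_coe.2 (e.symm.strictMono (by omega))
    obtain ⟨m, n, hmn, heq⟩ := Finite.exists_ne_map_eq_of_infinite
      (fun n : ℕ => (⟨f n, Finset.mem_Icc.2
        ⟨hle _ (hfc n), hanti.antitone (Nat.zero_le n)⟩⟩ : {z // z ∈ Finset.Icc x (f 0)}))
    have hfeq : f m = f n := congrArg (fun z : {z // z ∈ Finset.Icc _ _} => z.val) heq
    exact hmn (hanti.injective hfeq)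
  obtain ⟨z₁, hz₁b, hxz₁⟩ := h1
  obtain ⟨z, hzT, hzmax⟩ := ((Finset.Ico z₁ x).filter (fun u => κ u = b)).exists_maximal
    ⟨z₁, by simp [Finset.mem_Ico, hxz₁, hz₁b]⟩
  simp only [Finset.mem_filter, Finset.mem_Ico] at hzT
  refine ⟨z, hzT.2, hzT.1.2, ?_⟩
  intro u hub hxu
  by_contra hzu
  have huz : z < u := by
    rcases hEC u z (hub.trans hzT.2.symm) with h | h
    · exact absurd h hzu
    · exact lt_of_le_of_ne h (fun he => hzu (le_of_eq he.symm))
  exact absurd (hzmax (Finset.mem_filter.2 ⟨Finset.mem_Ico.2 ⟨hzT.1.1.trans huz.le, hxu⟩, hub⟩) huz.le) (not_le_of_gt huz)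


theorem g4_of (D : DynkinDiagram Γ) (κ : P → Γ) (hEC : EC κ) (hNA : NA D κ)
    (hAC : AC D κ) (hICE : ICE2 D κ) (hG3 : G3 κ) : G4 D κ := by
  classical
  intro a b hab x hxa
  subst hxa
  have hxb : κ x ≠ b := fun h => hab.1 h
  have hcomp : ∀ u : P, κ u = b → u ≤ x ∨ x ≤ u := fun u hu =>
    hAC u x (by rw [hu]; exact hab.symm)
  obtain ⟨z, hzb, hxz, hzmin⟩ := next_color κ hEC (hG3 b) hxb hcomp
  obtain ⟨z', hz'b, hz'x, hz'max⟩ := prev_color κ hEC (hG3 b) hxb hcomp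
  have hcons : Consecutive κ b z' z := by
    refine ⟨hz'x.trans hxz, hz'b, hzb, ?_⟩
    intro t ht htb
    rw [Finset.mem_Ioo] at ht
    rcases hcomp t htb with h | h
    · have htx : t < x := lt_of_le_of_ne h (fun he => hxb (he ▸ htb))
      exact absurd (hz'max t htb htx) (not_le_of_gt ht.1)
    · have hxt : x < t := lt_of_le_of_ne h (fun he => hxb (he.symm ▸ htb))
      exact absurd (hzmin t htb hxt) (not_le_of_gt ht.2)
  have hsum := hICE b z' z hcons
  obtain ⟨s, hcovs, hsx⟩ := hz'x.exists_covby_le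
  obtain ⟨t, hxt, hcovt⟩ := hxz.exists_le_covby
  by_cases hsx' : s = x
  · exact ⟨z', hz'b, Or.inr (hsx' ▸ hcovs)⟩
  by_cases htx' : t = x
  · exact ⟨z, hzb, Or.inl (htx' ▸ hcovt)⟩
  exfalso
  have hslt : s < x := lt_of_le_of_ne hsx hsx'
  have hxlt : x < t := lt_of_le_of_ne hxt (Ne.symm htx')
  have hsS : s ∈ Finset.Ioo z' z := Finset.mem_Ioo.2 ⟨hcovs.lt, hslt.trans hxz⟩
  have hxS : x ∈ Finset.Ioo z' z := Finset.mem_Ioo.2 ⟨hz'x, hxz⟩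
  have htS : t ∈ Finset.Ioo z' z := Finset.mem_Ioo.2 ⟨hz'x.trans hxlt, hcovt.lt⟩
  have hws : 1 ≤ -D.θ (κ s) b := by
    have h1 : D.Adj b (κ s) := hz'b ▸ hNA z' s hcovs
    have h2 := h1.symm.2
    linarith
  have hwt : 1 ≤ -D.θ (κ t) b := by
    have h1 : D.Adj (κ t) b := hzb ▸ hNA t z hcovt
    have h2 := h1.2
    linarith
  have hwx : 1 ≤ -D.θ (κ x) b := by
    have h2 := hab.2
    linarith
  have hsub : ({s, x, t} : Finset P) ⊆ Finset.Ioo z' z := by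
    intro u hu
    simp only [Finset.mem_insert, Finset.mem_singleton] at hu
    rcases hu with rfl | rfl | rfl <;> assumption
  have hnn : ∀ u ∈ Finset.Ioo z' z, 0 ≤ -D.θ (κ u) b := by
    intro u hu
    have hub : κ u ≠ b := hcons.2.2.2 u hu
    have := D.offdiag_nonpos (κ u) b hub
    linarith
  have h3 : (3 : ℤ) ≤ ∑ u ∈ ({s, x, t} : Finset P), -D.θ (κ u) b := by
    rw [Finset.sum_insert (by simp [hslt.ne, (hslt.trans hxlt).ne]),
      Finset.sum_insert (by simp [hxlt.ne]), Finset.sum_singleton]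
    linarith
  have hle := Finset.sum_le_sum_of_subset_of_nonneg hsub (fun u hu _ => hnn u hu)
  rw [hsum] at hle
  linarith

theorem g2_of (D : DynkinDiagram Γ) (κ : P → Γ) (hNA : NA D κ) : G2 D κ := by
  have key : ∀ n : ℕ, ∀ x y : P, (Finset.Icc x y).card ≤ n → x ≤ y →
      Relation.ReflTransGen (fun u v : P => u ≤ v ∧ (κ u = κ v ∨ D.Adj (κ u) (κ v))) x y := by
    intro n
    induction n with
    | zero =>
      intro x y hc hxy
      have : 0 < (Finset.Icc x y).card :=
        Finset.card_pos.2 ⟨x, Finset.mem_Icc.2 ⟨le_rfl, hxy⟩⟩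
      omega
    | succ n ih =>
      intro x y hc hxy
      rcases eq_or_lt_of_le hxy with rfl | hlt
      · exact .refl
      obtain ⟨s, hcov, hsy⟩ := hlt.exists_covby_le
      have hcard : (Finset.Icc s y).card ≤ n := by
        have h1 : Finset.Icc s y ⊆ Finset.Icc x y := Finset.Icc_subset_Icc_left hcov.le
        have h2 : x ∉ Finset.Icc s y := by
          simp only [Finset.mem_Icc, not_and]
          intro h
          exact absurd h (not_le_of_gt hcov.lt)
        have h3 := Finset.card_lt_card ((Finset.ssubset_iff_of_subset h1).2
          ⟨x, Finset.mem_Icc.2 ⟨le_rfl, hxy⟩, h2⟩)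
        omega
      exact Relation.ReflTransGen.head ⟨hcov.le, Or.inr (hNA x s hcov)⟩ (ih s y hcard hsy)
  exact fun x y hxy => key (Finset.Icc x y).card x y le_rfl hxy

theorem rtg_le {r : P → P → Prop} (hr : ∀ u v, r u v → u ≤ v) {x y : P}
    (h : Relation.ReflTransGen r x y) : x ≤ y := by
  induction h with
  | refl => exact le_rfl
  | tail _ h₂ ih => exact ih.trans (hr _ _ h₂)

theorem na_of (D : DynkinDiagram Γ) (κ : P → Γ) (hG2 : G2 D κ) (hG5 : G5 D κ) : NA D κ := by
  intro x y hxy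
  have key : ∀ c : P, Relation.ReflTransGen
      (fun u v : P => u ≤ v ∧ (κ u = κ v ∨ D.Adj (κ u) (κ v))) x c →
      x ⋖ c → D.Adj (κ x) (κ c) := by
    intro c hc
    induction hc with
    | refl => intro h; exact absurd h.lt (lt_irrefl x)
    | @tail b c hab hbc ih =>
      intro hcov
      have hxb : x ≤ b := rtg_le (fun _ _ h => h.1) hab
      rcases hcov.eq_or_eq hxb hbc.1 with hbx | hbc'
      · rw [hbx] at hbc
        rcases hbc.2 with heq | hadj
        · exfalso
          have hIoo : Finset.Ioo x c = ∅ :=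
            Finset.eq_empty_of_forall_notMem (fun z hz =>
              hcov.2 (Finset.mem_Ioo.1 hz).1 (Finset.mem_Ioo.1 hz).2)
          have hconsec : Consecutive κ (κ x) x c :=
            ⟨hcov.lt, rfl, heq.symm, fun z hz => by rw [hIoo] at hz; exact absurd hz (by simp)⟩
          have h5 := hG5 (κ x) x c hconsec
          rw [sum_Icc_split hcov.lt, hIoo, Finset.sum_empty, ← heq, D.diag] at h5
          norm_num at h5
        · exact hadj
      · subst hbc'
        exact ih hcov
  exact key y (hG2 x y hxy.le) hxy

/-- EC, NA, AC, ICE2, G3 hold iff `P` is a full heap. -/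
theorem statement3 (D : DynkinDiagram Γ) (κ : P → Γ) (hsurj : Function.Surjective κ) :
    (EC κ ∧ NA D κ ∧ AC D κ ∧ ICE2 D κ ∧ G3 κ) ↔ FullHeap D κ := by
  constructor
  · rintro ⟨hEC, hNA, hAC, hICE, hG3⟩
    refine ⟨⟨?_, ?_⟩, g2_of D κ hNA, hG3, g4_of D κ hEC hNA hAC hICE hG3, ?_⟩
    · intro a u hu v hv _
      exact hEC u v ((show κ u = a from hu).trans (show κ v = a from hv).symm)
    · intro b c hbc u hu v hv _
      rcases (show κ u = b ∨ κ u = c from hu) with h1 | h1 <;>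
        rcases (show κ v = b ∨ κ v = c from hv) with h2 | h2
      · exact hEC u v (h1.trans h2.symm)
      · exact hAC u v (by rw [h1, h2]; exact hbc)
      · exact hAC u v (by rw [h1, h2]; exact hbc.symm)
      · exact hEC u v (h1.trans h2.symm)
    · intro a x y hcons
      have h := hICE a x y hcons
      have h2 : ∑ z ∈ Finset.Ioo x y, D.θ (κ z) a = -2 := by
        rw [Finset.sum_neg_distrib] at h
        linarith
      rw [sum_Icc_split hcons.1, hcons.2.1, hcons.2.2.1, D.diag, h2]
      norm_num
  · rintro ⟨hG1, hG2, hG3, hG4, hG5⟩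
    have hNA := na_of D κ hG2 hG5
    refine ⟨?_, hNA, ?_, ?_, hG3⟩
    · intro x y h
      by_cases hxy : x = y
      · exact Or.inl (le_of_eq hxy)
      · exact hG1.1 (κ x) (show x ∈ _ from rfl) (show y ∈ _ from h.symm) hxy
    · intro x y hadj
      by_cases hxy : x = y
      · exact Or.inl (le_of_eq hxy)
      · exact hG1.2 (κ x) (κ y) hadj (show x ∈ _ from Or.inl rfl)
          (show y ∈ _ from Or.inr rfl) hxy
    · intro a x y hcons
      have h := hG5 a x y hcons
      rw [sum_Icc_split hcons.1, hcons.2.1, hcons.2.2.1, D.diag] at h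
      rw [Finset.sum_neg_distrib]
      linarith


end GCP
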